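/- Let M ≥ 2, k ≥ 1 and j with j ≤ d−1 be positive integers, and let A ∈ {−M,…,M}^{n×d} be a matrix with integer entries whose rank is larger than k(j+1). Then for every set C ⊆ ℝ^d that is a union of k affine j-dimensional subspaces of ℝ^d, max_{1≤i≤n} dist(A_{i*}, C) ≥ 1/(2·(j+1)!·(2√d·M)^j). If additionally ‖A_{i*}‖₂ ≤ M for all 1 ≤ i ≤ n, then max_{1≤i≤n} dist(A_{i*}, C) ≥ 1/(2·(j+1)!·(2M)^j). -/

import Mathlib

open Matrix

/-- Identify a plain vector in `Fin d → ℝ` with a point of Euclidean space `ℝ^d`. -/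
noncomputable def toEuc {d : ℕ} (v : Fin d → ℝ) : EuclideanSpace ℝ (Fin d) :=
  (WithLp.equiv 2 (Fin d → ℝ)).symm v

/-- Squared Euclidean distance from a point (given as a row vector) to a set. -/
noncomputable def rowDistSq {d : ℕ} (p : Fin d → ℝ) (C : Set (EuclideanSpace ℝ (Fin d))) : ℝ :=
  (Metric.infDist (toEuc p) C) ^ 2

/-- `dist²(A, C)`: sum of squared Euclidean distances of the rows of `A` to the set `C`. -/
noncomputable def matDistSq {n d : ℕ} (A : Matrix (Fin n) (Fin d) ℝ)
    (C : Set (EuclideanSpace ℝ (Fin d))) : ℝ :=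
  ∑ i, rowDistSq (A i) C

/-- Squared Frobenius norm of a matrix. -/
noncomputable def frobSq {n d : ℕ} (A : Matrix (Fin n) (Fin d) ℝ) : ℝ :=
  ∑ i, ∑ j, (A i j) ^ 2

/-- `C` is an affine `j`-dimensional subspace of `ℝ^d`. -/
def IsAffineSub (d j : ℕ) (C : Set (EuclideanSpace ℝ (Fin d))) : Prop :=
  ∃ (p : EuclideanSpace ℝ (Fin d)) (L : Submodule ℝ (EuclideanSpace ℝ (Fin d))),
    Module.finrank ℝ L = j ∧ C = (fun x => p + x) '' (L : Set (EuclideanSpace ℝ (Fin d)))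

/-- `C` is a union of `k` affine `j`-dimensional subspaces of `ℝ^d`. -/
def IsKAffineUnion (d j k : ℕ) (C : Set (EuclideanSpace ℝ (Fin d))) : Prop :=
  ∃ f : Fin k → Set (EuclideanSpace ℝ (Fin d)),
    (∀ i, IsAffineSub d j (f i)) ∧ C = ⋃ i, f i

open Finset Module Submodule
open InnerProductSpace

local notation "⟪" x ", " y "⟫" => @inner ℝ _ _ x y

instance finWellFoundedLT {m : ℕ} : WellFoundedLT (Fin m) := Finite.to_wellFoundedLT

variable {E : Type*} [NormedAddCommGroup E] [InnerProductSpace ℝ E]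

/-- Gram matrix of a finite family of vectors. -/
noncomputable def gramM {m : ℕ} (v : Fin m → E) : Matrix (Fin m) (Fin m) ℝ :=
  Matrix.of fun a b => ⟪v a, v b⟫

lemma gramM_transform {m : ℕ} (v : Fin m → E) (T : Matrix (Fin m) (Fin m) ℝ) :
    gramM (fun a => ∑ x, T a x • v x) = T * gramM v * Tᵀ := by
  ext a b
  simp only [gramM, Matrix.of_apply, Matrix.mul_apply, Matrix.transpose_apply,
    sum_inner, inner_sum, real_inner_smul_left, real_inner_smul_right, Finset.sum_mul,
    Finset.mul_sum]
  refine Finset.sum_congr rfl fun x _ => Finset.sum_congr rfl fun y _ => ?_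
  ring

lemma gramSchmidt_sub_mem_span {m : ℕ} (w : Fin m → E) (a : Fin m) :
    w a - gramSchmidt ℝ w a ∈ span ℝ (gramSchmidt ℝ w '' Set.Iio a) := by
  have h := gramSchmidt_def' ℝ w a
  have h2 : w a - gramSchmidt ℝ w a
      = ∑ i ∈ Finset.Iio a, (orthogonalProjection (ℝ ∙ gramSchmidt ℝ w i) (w a) : E) :=
    sub_eq_iff_eq_add'.mpr h
  rw [h2]
  refine Submodule.sum_mem _ fun i hi => ?_
  have h1 : (orthogonalProjection (ℝ ∙ gramSchmidt ℝ w i) (w a) : E)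
      ∈ (ℝ ∙ gramSchmidt ℝ w i) := SetLike.coe_mem _
  refine Submodule.span_mono ?_ h1
  simp only [Set.singleton_subset_iff]
  exact ⟨i, Finset.mem_Iio.mp hi, rfl⟩

lemma gramSchmidt_dist_le {m : ℕ} (w : Fin m → E) (a : Fin m) (z : E)
    (hz : z ∈ span ℝ (gramSchmidt ℝ w '' Set.Iio a)) :
    ‖gramSchmidt ℝ w a‖ ≤ ‖w a - z‖ := by
  set g := gramSchmidt ℝ w with hg
  have hy : w a - g a - z ∈ span ℝ (g '' Set.Iio a) :=
    Submodule.sub_mem _ (gramSchmidt_sub_mem_span w a) hz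
  have horth : span ℝ (g '' Set.Iio a) ≤ (ℝ ∙ g a)ᗮ := by
    rw [Submodule.span_le]
    rintro _ ⟨i, hi, rfl⟩
    rw [SetLike.mem_coe, Submodule.mem_orthogonal_singleton_iff_inner_right]
    exact gramSchmidt_orthogonal ℝ w (ne_of_gt hi)
  have hinner : ⟪g a, w a - g a - z⟫ = 0 := by
    have := horth hy
    rw [Submodule.mem_orthogonal_singleton_iff_inner_right] at this
    exact this
  have hdecomp : w a - z = g a + (w a - g a - z) := by abel
  rw [hdecomp]
  have hsq := norm_add_sq_real (g a) (w a - g a - z)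
  nlinarith [norm_nonneg (g a + (w a - g a - z)), norm_nonneg (w a - g a - z),
    norm_nonneg (g a)]

lemma det_gramM_eq_prod {m : ℕ} (w : Fin m → E) :
    (gramM w).det = ∏ a, ‖gramSchmidt ℝ w a‖ ^ 2 := by
  classical
  set g := gramSchmidt ℝ w with hg
  set T : Matrix (Fin m) (Fin m) ℝ :=
    Matrix.of fun a x => if x = a then 1 else if x < a then ⟪g x, w a⟫ / (‖g x‖ : ℝ) ^ 2 else 0
    with hT
  have hrep : ∀ a, w a = ∑ x, T a x • g x := by
    intro a
    have h := gramSchmidt_def'' ℝ w a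
    have hsub : ∑ x, T a x • g x = ∑ x ∈ insert a (Finset.Iio a), T a x • g x := by
      symm
      refine Finset.sum_subset (Finset.subset_univ _) fun x _ hx => ?_
      have hxa : ¬(x = a) := fun h' => hx (by simp [h'])
      have hxlt : ¬(x < a) := fun h' =>
        hx (Finset.mem_insert.mpr (Or.inr (Finset.mem_Iio.mpr h')))
      simp [hT, hxa, hxlt]
    rw [hsub, Finset.sum_insert (by simp)]
    have : ∀ x ∈ Finset.Iio a, T a x • g x = (⟪g x, w a⟫ / (‖g x‖ : ℝ) ^ 2) • g x := by
      intro x hx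
      have hlt := Finset.mem_Iio.mp hx
      simp [hT, ne_of_lt hlt, hlt]
    rw [Finset.sum_congr rfl this]
    simpa [hT] using h
  have hgram : gramM w = T * gramM g * Tᵀ := by
    have : w = fun a => ∑ x, T a x • g x := funext hrep
    rw [show gramM w = gramM (fun a => ∑ x, T a x • g x) by rw [← this]]
    exact gramM_transform g T
  have hdiag : gramM g = Matrix.diagonal fun a => ‖g a‖ ^ 2 := by
    ext a b
    by_cases hab : a = b
    · subst hab; simp [gramM, Matrix.diagonal, real_inner_self_eq_norm_sq]
    · simp [gramM, Matrix.diagonal, hab, hg, gramSchmidt_orthogonal ℝ w hab]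
  have hTdet : T.det = 1 := by
    rw [← Matrix.det_transpose]
    rw [Matrix.det_of_upperTriangular (M := Tᵀ) ?ht]
    · simp [hT, Matrix.transpose_apply]
    · intro i j hij
      have h1 : ¬(i = j) := fun h => by subst h; exact lt_irrefl _ hij
      have h2 : ¬(i < j) := fun h => absurd hij (not_lt.mpr h.le)
      simp [hT, Matrix.transpose_apply, h1, h2]
  rw [hgram, Matrix.det_mul, Matrix.det_mul, hdiag, Matrix.det_diagonal, Matrix.det_transpose,
    hTdet, one_mul, mul_one]

lemma inner_toEuc {d : ℕ} (x y : Fin d → ℝ) :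
    ⟪toEuc x, toEuc y⟫ = ∑ l, x l * y l := by
  simp [toEuc, PiLp.inner_apply, RCLike.inner_apply, starRingEnd_apply, mul_comm]

lemma toEuc_sub {d : ℕ} (x y : Fin d → ℝ) : toEuc x - toEuc y = toEuc (x - y) := rfl

lemma norm_toEuc_le {d : ℕ} (x : Fin d → ℝ) (c : ℝ) (hc : 0 ≤ c) (h : ∀ l, |x l| ≤ c) :
    ‖toEuc x‖ ≤ Real.sqrt d * c := by
  rw [show (toEuc x : EuclideanSpace ℝ (Fin d)) = (WithLp.equiv 2 (Fin d → ℝ)).symm x from rfl]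
  rw [EuclideanSpace.norm_eq]
  have h1 : ∑ l, ‖((WithLp.equiv 2 (Fin d → ℝ)).symm x) l‖ ^ 2 ≤ ∑ _l : Fin d, c ^ 2 := by
    refine Finset.sum_le_sum fun l _ => ?_
    rw [Real.norm_eq_abs]
    calc |((WithLp.equiv 2 (Fin d → ℝ)).symm x) l| ^ 2 = |x l| ^ 2 := rfl
    _ ≤ c ^ 2 := by
        have := h l
        nlinarith [abs_nonneg (x l)]
  calc Real.sqrt (∑ l, ‖((WithLp.equiv 2 (Fin d → ℝ)).symm x) l‖ ^ 2)
      ≤ Real.sqrt (∑ _l : Fin d, c ^ 2) := Real.sqrt_le_sqrt h1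
  _ = Real.sqrt ((d : ℝ) * c ^ 2) := by rw [Finset.sum_const, Finset.card_univ,
      Fintype.card_fin, nsmul_eq_mul]
  _ = Real.sqrt d * c := by
      rw [Real.sqrt_mul (Nat.cast_nonneg d), Real.sqrt_sq hc]

lemma stmt16_core {d m : ℕ} (L : Submodule ℝ (EuclideanSpace ℝ (Fin d)))
    (hL : Module.finrank ℝ L = m)
    (w : Fin (m + 1) → EuclideanSpace ℝ (Fin d))
    (W : Fin (m + 1) → Fin d → ℤ) (hw : ∀ a, w a = toEuc fun l => (W a l : ℝ))
    (hind : LinearIndependent ℝ w)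
    (R ε : ℝ) (hR : 0 < R) (hε : 0 < ε)
    (hnorm : ∀ a, ‖w a‖ ≤ R)
    (hclose : ∀ a, ∃ u ∈ L, ‖w a - u‖ < ε) :
    1 < (((m : ℝ) + 1) * ε * R ^ m) ^ 2 := by
  classical
  choose u huL hue using hclose
  -- a nontrivial dependency among the `u`s
  have hdep : ¬ LinearIndependent ℝ (fun a => (⟨u a, huL a⟩ : L)) := by
    intro h
    have := h.fintype_card_le_finrank
    rw [hL, Fintype.card_fin] at this
    omega
  obtain ⟨c, hcsum, a₀, hc0⟩ := Fintype.not_linearIndependent_iff.mp hdep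
  have hcsum' : ∑ a, c a • u a = 0 := by
    have := congrArg (Subtype.val) hcsum
    simpa using this
  obtain ⟨b, -, hbmax⟩ := Finset.exists_max_image Finset.univ (fun a => |c a|)
    ⟨a₀, Finset.mem_univ a₀⟩
  have hcb : c b ≠ 0 := by
    intro h
    have := hbmax a₀ (Finset.mem_univ a₀)
    rw [h, abs_zero] at this
    exact hc0 (abs_eq_zero.mp (le_antisymm this (abs_nonneg _)))
  set σ := Equiv.swap b (Fin.last m) with hσ
  set w₂ : Fin (m + 1) → EuclideanSpace ℝ (Fin d) := w ∘ σ with hw₂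
  set c₂ : Fin (m + 1) → ℝ := fun a => c (σ a) / c b with hc₂
  have hσlast : σ (Fin.last m) = b := Equiv.swap_apply_right b (Fin.last m)
  have hc₂last : c₂ (Fin.last m) = 1 := by
    simp [hc₂, hσlast, div_self hcb]
  have hc₂le : ∀ a, |c₂ a| ≤ 1 := by
    intro a
    rw [hc₂, abs_div, div_le_one (abs_pos.mpr hcb)]
    exact hbmax (σ a) (Finset.mem_univ _)
  have hu₂sum : ∑ a, c₂ a • u (σ a) = 0 := by
    have h1 : ∑ a, c₂ a • u (σ a) = (c b)⁻¹ • ∑ a, c (σ a) • u (σ a) := by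
      rw [Finset.smul_sum]
      refine Finset.sum_congr rfl fun a _ => ?_
      rw [smul_smul, hc₂]
      congr 1
      field_simp
    rw [h1, Equiv.sum_comp σ (fun a => c a • u a), hcsum', smul_zero]
  have hind₂ : LinearIndependent ℝ w₂ := hind.comp σ σ.injective
  set g := gramSchmidt ℝ w₂ with hgdef
  -- integrality of the Gram determinant
  set G : Matrix (Fin (m + 1)) (Fin (m + 1)) ℤ :=
    Matrix.of fun a x => ∑ l, W (σ a) l * W (σ x) l with hG
  have hgram_int : gramM w₂ = G.map (Int.cast : ℤ → ℝ) := by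
    ext a x
    simp only [gramM, Matrix.of_apply, Matrix.map_apply, hw₂, Function.comp_apply, hw, hG]
    rw [inner_toEuc]
    push_cast
    rfl
  have hdet : (gramM w₂).det = ((G.det : ℤ) : ℝ) := by
    rw [hgram_int]
    have hmd := RingHom.map_det (Int.castRingHom ℝ) G
    rw [RingHom.mapMatrix_apply] at hmd
    simpa using hmd.symm
  have hprod_pos : 0 < ∏ a, ‖g a‖ ^ 2 := by
    refine Finset.prod_pos fun a _ => ?_
    have hgne : g a ≠ 0 := gramSchmidt_ne_zero a hind₂
    exact pow_pos (norm_pos_iff.mpr hgne) 2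
  have h1le : (1 : ℝ) ≤ ∏ a, ‖g a‖ ^ 2 := by
    have hPdet : ∏ a, ‖g a‖ ^ 2 = ((G.det : ℤ) : ℝ) := by
      rw [← det_gramM_eq_prod w₂, hdet]
    have : (0 : ℝ) < ((G.det : ℤ) : ℝ) := hPdet ▸ hprod_pos
    have : 0 < G.det := by exact_mod_cast this
    rw [hPdet]
    exact_mod_cast this
  -- the last Gram-Schmidt vector is small
  set s := ∑ a, c₂ a • w₂ a with hs
  have hssmall : ‖s‖ < ((m : ℝ) + 1) * ε := by
    have hs2 : s = ∑ a, c₂ a • (w₂ a - u (σ a)) := by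
      rw [hs]
      rw [show ∑ a, c₂ a • (w₂ a - u (σ a))
          = ∑ a, c₂ a • w₂ a - ∑ a, c₂ a • u (σ a) by
        rw [← Finset.sum_sub_distrib]
        exact Finset.sum_congr rfl fun a _ => smul_sub _ _ _]
      rw [hu₂sum, sub_zero]
    calc ‖s‖ ≤ ∑ a, ‖c₂ a • (w₂ a - u (σ a))‖ := by rw [hs2]; exact norm_sum_le _ _
    _ < ∑ _a : Fin (m + 1), ε := by
        refine Finset.sum_lt_sum_of_nonempty ⟨Fin.last m, Finset.mem_univ _⟩ fun a _ => ?_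
        rw [norm_smul, Real.norm_eq_abs]
        calc |c₂ a| * ‖w₂ a - u (σ a)‖ ≤ 1 * ‖w₂ a - u (σ a)‖ :=
          mul_le_mul_of_nonneg_right (hc₂le a) (norm_nonneg _)
        _ < ε := by rw [one_mul]; exact hue (σ a)
    _ = ((m : ℝ) + 1) * ε := by
        rw [Finset.sum_const, Finset.card_univ, Fintype.card_fin, nsmul_eq_mul]
        push_cast; ring
  have hzmem : w₂ (Fin.last m) - s ∈ span ℝ (g '' Set.Iio (Fin.last m)) := by
    rw [hgdef, span_gramSchmidt_Iio ℝ w₂ (Fin.last m)]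
    have hz : w₂ (Fin.last m) - s = - ∑ a ∈ Finset.univ.erase (Fin.last m), c₂ a • w₂ a := by
      rw [hs, ← Finset.add_sum_erase Finset.univ _ (Finset.mem_univ (Fin.last m)), hc₂last,
        one_smul]
      abel
    rw [hz]
    refine neg_mem (Submodule.sum_mem _ fun a ha => Submodule.smul_mem _ _ (subset_span ?_))
    have hne := Finset.ne_of_mem_erase ha
    have hlt : a < Fin.last m := lt_of_le_of_ne (Fin.le_last a) hne
    exact ⟨a, hlt, rfl⟩
  have hglast : ‖g (Fin.last m)‖ < ((m : ℝ) + 1) * ε := by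
    have h1 := gramSchmidt_dist_le w₂ (Fin.last m) _ hzmem
    rw [sub_sub_cancel] at h1
    exact lt_of_le_of_lt h1 hssmall
  have hgle : ∀ a, ‖g a‖ ≤ R := fun a => by
    have h1 := gramSchmidt_dist_le w₂ a 0 (Submodule.zero_mem _)
    rw [sub_zero] at h1
    exact h1.trans (hnorm (σ a))
  -- combine
  have hsplit : ∏ a, ‖g a‖ ^ 2
      = (∏ a : Fin m, ‖g a.castSucc‖ ^ 2) * ‖g (Fin.last m)‖ ^ 2 :=
    Fin.prod_univ_castSucc _
  have hfirst : ∏ a : Fin m, ‖g a.castSucc‖ ^ 2 ≤ (R ^ m) ^ 2 := by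
    calc ∏ a : Fin m, ‖g a.castSucc‖ ^ 2
        ≤ ∏ _a : Fin m, R ^ 2 :=
          Finset.prod_le_prod (fun a _ => by positivity)
            (fun a _ => pow_le_pow_left₀ (norm_nonneg _) (hgle _) 2)
      _ = (R ^ m) ^ 2 := by
          rw [Finset.prod_const, Finset.card_univ, Fintype.card_fin]; ring
  have hlast2 : ‖g (Fin.last m)‖ ^ 2 < (((m : ℝ) + 1) * ε) ^ 2 := by
    have h0 : (0 : ℝ) ≤ ‖g (Fin.last m)‖ := norm_nonneg _
    nlinarith
  calc (1 : ℝ) ≤ ∏ a, ‖g a‖ ^ 2 := h1le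
  _ = (∏ a : Fin m, ‖g a.castSucc‖ ^ 2) * ‖g (Fin.last m)‖ ^ 2 := hsplit
  _ ≤ (R ^ m) ^ 2 * ‖g (Fin.last m)‖ ^ 2 :=
      mul_le_mul_of_nonneg_right hfirst (by positivity)
  _ < (R ^ m) ^ 2 * (((m : ℝ) + 1) * ε) ^ 2 :=
      mul_lt_mul_of_pos_left hlast2 (by positivity)
  _ = (((m : ℝ) + 1) * ε * R ^ m) ^ 2 := by ring

lemma stmt16_finrank_iSup_le {V : Type*} [AddCommGroup V] [Module ℝ V] [FiniteDimensional ℝ V]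
    {k : ℕ} (D : Fin k → Submodule ℝ V) :
    Module.finrank ℝ ↥(⨆ t, D t) ≤ ∑ t, Module.finrank ℝ ↥(D t) := by
  induction k with
  | zero =>
      simp [iSup_of_empty]
  | succ k ih =>
      have hsup : (⨆ t, D t) = (⨆ t : Fin k, D t.castSucc) ⊔ D (Fin.last k) := by
        apply le_antisymm
        · refine iSup_le fun t => ?_
          refine Fin.lastCases (motive := fun t => D t ≤ (⨆ t : Fin k, D t.castSucc) ⊔ D (Fin.last k)) ?_ ?_ t
          · exact le_sup_right
          · intro i
            exact le_trans (le_iSup (fun t : Fin k => D t.castSucc) i) le_sup_left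
        · exact sup_le (iSup_le fun i => le_iSup D i.castSucc) (le_iSup D (Fin.last k))
      rw [hsup, Fin.sum_univ_castSucc]
      exact le_trans (Submodule.finrank_add_le_finrank_add_finrank _ _)
        (add_le_add (ih _) le_rfl)

/-- The key quantitative lemma. -/
lemma stmt16_key {n d : ℕ} (k m : ℕ) (hk : 1 ≤ k) (v : Fin n → EuclideanSpace ℝ (Fin d))
    (Vint : Fin n → Fin d → ℤ) (hv : ∀ i, v i = toEuc fun l => (Vint i l : ℝ))
    (hrank : k * (m + 1) < Module.finrank ℝ (span ℝ (Set.range v)))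
    (R B : ℝ) (hR : 0 < R) (hB : 0 < B)
    (hnorm : ∀ i i', ‖v i - v i'‖ ≤ R)
    (hsmall : ((m : ℝ) + 1) * (2 * B) * R ^ m ≤ 1)
    (C : Set (EuclideanSpace ℝ (Fin d))) (hC : IsKAffineUnion d m k C) :
    ∃ i, B ≤ Metric.infDist (v i) C := by
  classical
  by_contra hcon
  push_neg at hcon
  obtain ⟨f, haff, rfl⟩ := hC
  choose p L hLrank hfeq using haff
  have hk0 : Nonempty (Fin k) := ⟨⟨0, hk⟩⟩
  obtain ⟨tstar⟩ := hk0
  have hCne : (⋃ t, f t).Nonempty := by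
    refine ⟨p tstar + 0, Set.mem_iUnion.mpr ⟨tstar, ?_⟩⟩
    rw [hfeq tstar]
    exact ⟨0, (L tstar).zero_mem, rfl⟩
  have hassign : ∀ i, ∃ t x, x ∈ L t ∧ ‖v i - (p t + x)‖ < B := by
    intro i
    obtain ⟨q, hqC, hqd⟩ := (Metric.infDist_lt_iff hCne).mp (hcon i)
    obtain ⟨t, hqt⟩ := Set.mem_iUnion.mp hqC
    rw [hfeq t] at hqt
    obtain ⟨x, hx, rfl⟩ := hqt
    exact ⟨t, x, hx, by rw [← dist_eq_norm]; exact hqd⟩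
  choose ti xi hxiL hxiB using hassign
  have hn : Nonempty (Fin n) := by
    by_contra hne
    rw [not_nonempty_iff] at hne
    rw [Set.range_eq_empty v, Submodule.span_empty] at hrank
    simp at hrank
  set β : Fin k → Fin n := fun t => if h : ∃ i, ti i = t then h.choose else Classical.arbitrary _
    with hβdef
  have hβ : ∀ t, (∃ i, ti i = t) → ti (β t) = t := by
    intro t h
    rw [hβdef]
    simp only [dif_pos h]
    exact h.choose_spec
  set D : Fin k → Submodule ℝ (EuclideanSpace ℝ (Fin d)) :=
    fun t => span ℝ {x | ∃ i, ti i = t ∧ x = v i - v (β t)} with hD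
  have hDex : ∃ t, m + 1 ≤ Module.finrank ℝ (D t) := by
    by_contra hno
    push_neg at hno
    have hle : span ℝ (Set.range v)
        ≤ span ℝ (Set.range fun t => v (β t)) ⊔ ⨆ t, D t := by
      rw [Submodule.span_le]
      rintro _ ⟨i, rfl⟩
      have h1 : v (β (ti i)) ∈ span ℝ (Set.range fun t => v (β t)) :=
        subset_span ⟨ti i, rfl⟩
      have h2 : v i - v (β (ti i)) ∈ D (ti i) := subset_span ⟨i, rfl, rfl⟩
      have h3 : v i = v (β (ti i)) + (v i - v (β (ti i))) := by abel
      rw [SetLike.mem_coe, h3]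
      exact Submodule.add_mem _ (Submodule.mem_sup_left h1)
        (Submodule.mem_sup_right (Submodule.mem_iSup_of_mem (ti i) h2))
    have h4 := Submodule.finrank_mono hle
    have h5 := Submodule.finrank_add_le_finrank_add_finrank
      (span ℝ (Set.range fun t => v (β t))) (⨆ t, D t)
    have h6 : Module.finrank ℝ (span ℝ (Set.range fun t => v (β t))) ≤ k := by
      have := finrank_span_le_card (R := ℝ) (Set.range fun t => v (β t))
      refine this.trans ?_
      rw [Set.toFinset_range]
      exact (Finset.card_image_le).trans (by simp)
    have h7 : Module.finrank ℝ ↥(⨆ t, D t) ≤ k * m := by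
      refine (stmt16_finrank_iSup_le D).trans ?_
      calc ∑ t, Module.finrank ℝ ↥(D t) ≤ ∑ _t : Fin k, m :=
            Finset.sum_le_sum fun t _ => Nat.lt_succ_iff.mp (hno t)
        _ = k * m := by simp [Finset.sum_const, mul_comm]
    have : Module.finrank ℝ (span ℝ (Set.range v)) ≤ k * (m + 1) := by
      calc Module.finrank ℝ (span ℝ (Set.range v)) ≤ _ := h4
        _ ≤ _ := h5
        _ ≤ k + k * m := add_le_add h6 h7
        _ = k * (m + 1) := by ring
    omega
  obtain ⟨t₀, ht₀⟩ := hDex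
  set s : Set (EuclideanSpace ℝ (Fin d)) := {x | ∃ i, ti i = t₀ ∧ x = v i - v (β t₀)}
    with hsdef
  obtain ⟨bs, hbs, hbspan, hbind⟩ := exists_linearIndependent ℝ s
  have hsfin : s.Finite := by
    refine Set.Finite.subset (Set.finite_range fun i => v i - v (β t₀)) ?_
    rintro x ⟨i, -, rfl⟩
    exact ⟨i, rfl⟩
  have hbfin : bs.Finite := hsfin.subset hbs
  haveI := hbfin.fintype
  have hcard : m + 1 ≤ Fintype.card bs := by
    have e1 : Module.finrank ℝ (span ℝ bs) = bs.toFinset.card :=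
      finrank_span_set_eq_card hbind
    have e2 : span ℝ s = D t₀ := rfl
    rw [hbspan, e2] at e1
    rw [Set.toFinset_card] at e1
    omega
  obtain ⟨emb⟩ := Function.Embedding.nonempty_of_card_le
    (by simpa using hcard : Fintype.card (Fin (m + 1)) ≤ Fintype.card bs)
  set w : Fin (m + 1) → EuclideanSpace ℝ (Fin d) := fun a => ((emb a : bs) : _) with hwdef
  have hwind : LinearIndependent ℝ w := hbind.comp emb emb.injective
  have hws : ∀ a, ∃ i, ti i = t₀ ∧ (w a : EuclideanSpace ℝ (Fin d)) = v i - v (β t₀) :=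
    fun a => hbs (emb a).2
  choose ia hia hwa using hws
  have hβt₀ : ti (β t₀) = t₀ := hβ t₀ ⟨ia 0, hia 0⟩
  have hcore := stmt16_core (L t₀) (hLrank t₀) w
    (fun a l => Vint (ia a) l - Vint (β t₀) l) ?_ hwind R (2 * B) hR (by positivity) ?_ ?_
  · have habs : (((m : ℝ) + 1) * (2 * B) * R ^ m) ^ 2 ≤ 1 := by
      have hx0 : (0:ℝ) ≤ ((m : ℝ) + 1) * (2 * B) * R ^ m := by positivity
      nlinarith
    linarith
  · intro a
    rw [hwa a, hv (ia a), hv (β t₀), toEuc_sub]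
    congr 1
    funext l
    push_cast
    rfl
  · intro a
    rw [hwa a]
    exact hnorm _ _
  · intro a
    refine ⟨xi (ia a) - xi (β t₀), ?_, ?_⟩
    · have m1 : xi (ia a) ∈ L t₀ := by
        have := hxiL (ia a); rwa [hia a] at this
      have m2 : xi (β t₀) ∈ L t₀ := by
        have := hxiL (β t₀); rwa [hβt₀] at this
      exact Submodule.sub_mem _ m1 m2
    · have e1 : w a - (xi (ia a) - xi (β t₀))
          = (v (ia a) - (p t₀ + xi (ia a))) - (v (β t₀) - (p t₀ + xi (β t₀))) := by
        rw [hwa a]; abel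
      rw [e1]
      have b1 : ‖v (ia a) - (p t₀ + xi (ia a))‖ < B := by
        have := hxiB (ia a); rwa [hia a] at this
      have b2 : ‖v (β t₀) - (p t₀ + xi (β t₀))‖ < B := by
        have := hxiB (β t₀); rwa [hβt₀] at this
      calc ‖_ - _‖ ≤ _ + _ := norm_sub_le _ _
        _ < B + B := add_lt_add b1 b2
        _ = 2 * B := by ring


/-- lower bound on the maximum distance: let `M ≥ 2`, `k ≥ 1`,
`1 ≤ j ≤ d-1` and let `A ∈ {-M,…,M}^{n×d}` be an integer matrix of rank larger than
`k(j+1)`.  Then for every union `C` of `k` affine `j`-dimensional subspaces some row of `A`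
has distance at least `1/(2·(j+1)!·(2√d·M)^j)` from `C`; if moreover every row of `A` has
Euclidean norm at most `M`, some row has distance at least `1/(2·(j+1)!·(2M)^j)`. -/
theorem stmt16 {n d : ℕ} (M k j : ℕ) (hM : 2 ≤ M) (hk : 1 ≤ k) (hj1 : 1 ≤ j) (hj2 : j < d)
    (A : Matrix (Fin n) (Fin d) ℤ) (hAent : ∀ i l, |A i l| ≤ (M : ℤ))
    (hrank : k * (j + 1) < (A.map (Int.cast : ℤ → ℝ)).rank)
    (C : Set (EuclideanSpace ℝ (Fin d))) (hC : IsKAffineUnion d j k C) :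
    (∃ i, 1 / (2 * (Nat.factorial (j + 1) : ℝ) * (2 * Real.sqrt d * M) ^ j) ≤
        Metric.infDist (toEuc ((A.map (Int.cast : ℤ → ℝ)) i)) C) ∧
      ((∀ i, ‖toEuc ((A.map (Int.cast : ℤ → ℝ)) i)‖ ≤ (M : ℝ)) →
        ∃ i, 1 / (2 * (Nat.factorial (j + 1) : ℝ) * (2 * (M : ℝ)) ^ j) ≤
          Metric.infDist (toEuc ((A.map (Int.cast : ℤ → ℝ)) i)) C) := by
  classical
  have hdpos : (0 : ℝ) < (d : ℝ) := by
    have : 0 < d := lt_of_le_of_lt (Nat.zero_le j) hj2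
    exact_mod_cast this
  have hMpos : (0 : ℝ) < (M : ℝ) := by
    have : 0 < M := lt_of_lt_of_le (by norm_num) hM
    exact_mod_cast this
  have hfacpos : (0 : ℝ) < (Nat.factorial (j + 1) : ℝ) := by
    exact_mod_cast Nat.factorial_pos (j + 1)
  have hfac : ((j : ℝ) + 1) ≤ (Nat.factorial (j + 1) : ℝ) := by
    have := Nat.self_le_factorial (j + 1)
    exact_mod_cast this
  set Ar : Matrix (Fin n) (Fin d) ℝ := A.map (Int.cast : ℤ → ℝ) with hAr
  set v : Fin n → EuclideanSpace ℝ (Fin d) := fun i => toEuc (Ar i) with hv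
  have hvint : ∀ i, v i = toEuc fun l => ((A i l : ℤ) : ℝ) := fun i => rfl
  have hrank' : k * (j + 1) < Module.finrank ℝ (span ℝ (Set.range v)) := by
    have hEquiv : span ℝ (Set.range v)
        = Submodule.map
            ((WithLp.linearEquiv 2 ℝ (Fin d → ℝ)).symm :
              (Fin d → ℝ) →ₗ[ℝ] EuclideanSpace ℝ (Fin d))
            (span ℝ (Set.range Ar)) := by
      rw [Submodule.map_span]
      congr 1
      show Set.range v = _ '' Set.range (fun i => Ar i)
      rw [← Set.range_comp]
      rfl
    have hfr : Module.finrank ℝ (span ℝ (Set.range v))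
        = Module.finrank ℝ (span ℝ (Set.range Ar)) := by
      rw [hEquiv]
      exact LinearEquiv.finrank_map_eq _ _
    rw [hfr]; rw [Matrix.rank_eq_finrank_span_row] at hrank
    exact hrank
  have hrowbound : ∀ i, ‖v i‖ ≤ Real.sqrt d * M := by
    intro i
    refine norm_toEuc_le (Ar i) (M : ℝ) (le_of_lt hMpos) fun l => ?_
    have h1 : |A i l| ≤ (M : ℤ) := hAent i l
    have h2 : Ar i l = ((A i l : ℤ) : ℝ) := rfl
    rw [h2, ← Int.cast_abs]
    exact_mod_cast h1
  constructor
  · -- first bound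
    set R : ℝ := 2 * Real.sqrt d * (M : ℝ) with hRdef
    have hR : 0 < R := by
      have := Real.sqrt_pos.mpr hdpos
      positivity
    set B : ℝ := 1 / (2 * (Nat.factorial (j + 1) : ℝ) * R ^ j) with hBdef
    have hB : 0 < B := by
      rw [hBdef]
      positivity
    have hnorm : ∀ i i', ‖v i - v i'‖ ≤ R := by
      intro i i'
      calc ‖v i - v i'‖ ≤ ‖v i‖ + ‖v i'‖ := norm_sub_le _ _
        _ ≤ Real.sqrt d * M + Real.sqrt d * M := add_le_add (hrowbound i) (hrowbound i')
        _ = R := by rw [hRdef]; ring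
    have hsmall : ((j : ℝ) + 1) * (2 * B) * R ^ j ≤ 1 := by
      have hRj : (0 : ℝ) < R ^ j := pow_pos hR j
      have : ((j : ℝ) + 1) * (2 * B) * R ^ j = ((j : ℝ) + 1) / (Nat.factorial (j + 1) : ℝ) := by
        rw [hBdef]
        field_simp
      rw [this, div_le_one hfacpos]
      exact hfac
    exact stmt16_key k j hk v (fun i => A i) hvint hrank' R B hR hB hnorm hsmall C hC
  · -- second bound
    intro hrows
    set R : ℝ := 2 * (M : ℝ) with hRdef
    have hR : 0 < R := by positivity
    set B : ℝ := 1 / (2 * (Nat.factorial (j + 1) : ℝ) * R ^ j) with hBdef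
    have hB : 0 < B := by
      rw [hBdef]
      positivity
    have hnorm : ∀ i i', ‖v i - v i'‖ ≤ R := by
      intro i i'
      calc ‖v i - v i'‖ ≤ ‖v i‖ + ‖v i'‖ := norm_sub_le _ _
        _ ≤ (M : ℝ) + (M : ℝ) := add_le_add (hrows i) (hrows i')
        _ = R := by rw [hRdef]; ring
    have hsmall : ((j : ℝ) + 1) * (2 * B) * R ^ j ≤ 1 := by
      have hRj : (0 : ℝ) < R ^ j := pow_pos hR j
      have : ((j : ℝ) + 1) * (2 * B) * R ^ j = ((j : ℝ) + 1) / (Nat.factorial (j + 1) : ℝ) := by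
        rw [hBdef]
        field_simp
      rw [this, div_le_one hfacpos]
      exact hfac
    exact stmt16_key k j hk v (fun i => A i) hvint hrank' R B hR hB hnorm hsmall C hC
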